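/- Let G be a mixed graph, C a vertex set, and suppose a path π between a ∈ A and b ∈ B is m-connecting given C with C disjoint from A∪B. Then π contains a subpath π' between some a' ∈ A and b' ∈ B all of whose intermediate vertices lie outside A∪B, and π' is m-connecting given C. -/

import Mathlib

structure MixedGraph (V : Type*) where
  dir : V → V → Prop
  bi : V → V → Prop
  bi_symm : ∀ {a b : V}, bi a b → bi b a

namespace MixedGraph

variable {V : Type*}

/-- A single edge traversal: a directed edge traversed forwards (`a → b`),
a directed edge traversed backwards (`a ← b`), or a bi-directed edge (`a ↔ b`). -/
inductive Step (G : MixedGraph V) : V → V → Type _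
  | fwd {a b : V} : G.dir a b → G.Step a b
  | bwd {a b : V} : G.dir b a → G.Step a b
  | bi  {a b : V} : G.bi a b → G.Step a b

/-- The edge has an arrowhead at its second endpoint. -/
def Step.arrowAtEnd {G : MixedGraph V} : {a b : V} → G.Step a b → Prop
  | _, _, .fwd _ => True
  | _, _, .bwd _ => False
  | _, _, .bi _ => True

/-- The edge has an arrowhead at its first endpoint. -/
def Step.arrowAtStart {G : MixedGraph V} : {a b : V} → G.Step a b → Prop
  | _, _, .fwd _ => False
  | _, _, .bwd _ => True
  | _, _, .bi _ => True

/-- Paths (possibly self-intersecting) in a mixed graph. -/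
inductive Walk (G : MixedGraph V) : V → V → Type _
  | nil {a : V} : G.Walk a a
  | cons {a b c : V} : G.Step a b → G.Walk b c → G.Walk a c

namespace Walk

variable {G : MixedGraph V}

def length : {a b : V} → G.Walk a b → ℕ
  | _, _, .nil => 0
  | _, _, .cons _ w => w.length + 1

def verts : {a b : V} → G.Walk a b → List V
  | a, _, .nil => [a]
  | a, _, .cons _ w => a :: w.verts

/-- The intermediate vertices of a walk. -/
def interm {a b : V} (w : G.Walk a b) : List V := w.verts.tail.dropLast

def append : {a b c : V} → G.Walk a b → G.Walk b c → G.Walk a c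
  | _, _, _, .nil, w' => w'
  | _, _, _, .cons s w, w' => .cons s (w.append w')

/-- Every intermediate vertex of the walk is a collider. -/
def IsPureCollider : {a b : V} → G.Walk a b → Prop
  | _, _, .nil => True
  | _, _, .cons _ .nil => True
  | _, _, .cons s (.cons t w) =>
      s.arrowAtEnd ∧ t.arrowAtStart ∧ (Walk.cons t w).IsPureCollider

/-- The walk is m-connecting given `C`: every non-collider on it is outside `C`
and every collider on it is in `C`. -/
def IsMConnecting (C : Set V) : {a b : V} → G.Walk a b → Prop
  | _, _, .nil => True
  | _, _, .cons _ .nil => True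
  | _, _, .cons (b := m) s (.cons t w) =>
      ((s.arrowAtEnd ∧ t.arrowAtStart) ↔ m ∈ C) ∧ (Walk.cons t w).IsMConnecting C

end Walk

variable (G : MixedGraph V)

/-- `A` and `B` are m-separated given `C`: no m-connecting walk given `C`
between a vertex of `A` and a vertex of `B`. -/
def MSep (A B C : Set V) : Prop :=
  ∀ a ∈ A, ∀ b ∈ B, ∀ w : G.Walk a b, ¬ w.IsMConnecting C

/-- `u` and `v` are joined by a pure-collider path (with at least one edge). -/
def ColliderConn (u v : V) : Prop :=
  ∃ w : G.Walk u v, 0 < w.length ∧ w.IsPureCollider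

/-- Vertices connected to `S` by a (possibly empty) path of bi-directed edges. -/
def district (S : Set V) : Set V :=
  {v | ∃ s ∈ S, Relation.ReflTransGen G.bi s v}

/-- Children of vertices in `S`. -/
def ch (S : Set V) : Set V := {v | ∃ a ∈ S, G.dir a v}

/-- Ancestors of `S` (including `S` itself). -/
def an (S : Set V) : Set V :=
  {v | ∃ s ∈ S, Relation.ReflTransGen G.dir v s}

/-- The subgraph induced by `W`: edges with both endpoints in `W`. -/
def induce (W : Set V) : MixedGraph V where
  dir a b := G.dir a b ∧ a ∈ W ∧ b ∈ W
  bi a b := G.bi a b ∧ a ∈ W ∧ b ∈ W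
  bi_symm h := ⟨G.bi_symm h.1, h.2.2, h.2.1⟩

/-- Separation in an undirected graph with adjacency `adj`: every path between
`A` and `B` intersects `C`, i.e. `B` is not reachable from `A` avoiding `C`. -/
def UndirSep (adj : V → V → Prop) (A B C : Set V) : Prop :=
  ∀ a ∈ A, ∀ b ∈ B, ¬ Relation.ReflTransGen (fun x y => adj x y ∧ y ∉ C) a b

inductive EdgeKind | fwd | bwd | bi
deriving DecidableEq

def Step.kind {G : MixedGraph V} : {a b : V} → G.Step a b → EdgeKind
  | _, _, .fwd _ => .fwd
  | _, _, .bwd _ => .bwd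
  | _, _, .bi _ => .bi

def Walk.kinds {G : MixedGraph V} : {a b : V} → G.Walk a b → List EdgeKind
  | _, _, .nil => []
  | _, _, .cons s w => s.kind :: w.kinds

end MixedGraph
namespace MixedGraph.Walk

variable {V : Type*} {G : MixedGraph V}

theorem verts_ne_nil' : ∀ {a b : V} (w : G.Walk a b), w.verts ≠ []
  | _, _, .nil => by simp [verts]
  | _, _, .cons s w => by simp [verts]

theorem verts_append' : ∀ {a b c : V} (w₁ : G.Walk a b) (w₂ : G.Walk b c),
    (w₁.append w₂).verts = w₁.verts.dropLast ++ w₂.verts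
  | _, _, _, .nil, w₂ => by simp [append, verts]
  | _, _, _, .cons s w, w₂ => by
      simp [append, verts, verts_append' w w₂,
        List.dropLast_cons_of_ne_nil (verts_ne_nil' w)]

theorem append_assoc' : ∀ {a b c d : V} (w₁ : G.Walk a b) (w₂ : G.Walk b c) (w₃ : G.Walk c d),
    (w₁.append w₂).append w₃ = w₁.append (w₂.append w₃)
  | _, _, _, _, .nil, _, _ => rfl
  | _, _, _, _, .cons s w, w₂, w₃ => by
      simp only [append]
      rw [append_assoc' w w₂ w₃]

theorem mconn_tail {C : Set V} : ∀ {a b c : V} (s : G.Step a b) (w : G.Walk b c),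
    (Walk.cons s w).IsMConnecting C → w.IsMConnecting C
  | _, _, _, _, .nil, _ => trivial
  | _, _, _, s, .cons t w, h => h.2

theorem mconn_append' {C : Set V} : ∀ {a b c : V} (w₁ : G.Walk a b) (w₂ : G.Walk b c),
    (w₁.append w₂).IsMConnecting C → w₁.IsMConnecting C ∧ w₂.IsMConnecting C
  | _, _, _, .nil, w₂, h => ⟨trivial, h⟩
  | _, _, _, .cons s .nil, w₂, h => ⟨trivial, mconn_tail s w₂ h⟩
  | _, _, _, .cons s (.cons t u), w₂, h => by
      simp only [append, IsMConnecting] at h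
      obtain ⟨hiff, hrest⟩ := h
      obtain ⟨h1, h2⟩ := mconn_append' (.cons t u) w₂ hrest
      exact ⟨⟨hiff, h1⟩, h2⟩

theorem split_first {S : Set V} : ∀ {x y : V} (w : G.Walk x y), y ∈ S →
    ∃ b', b' ∈ S ∧ ∃ (p : G.Walk x b') (q : G.Walk b' y),
      w = p.append q ∧ ∀ v ∈ p.verts.dropLast, v ∉ S := by
  intro x y w
  induction w with
  | nil =>
    intro hy
    exact ⟨_, hy, .nil, .nil, rfl, by simp [verts]⟩
  | @cons a m y s w ih =>
    intro hy
    by_cases hx : a ∈ S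
    · exact ⟨a, hx, .nil, .cons s w, rfl, by simp [verts]⟩
    · obtain ⟨b', hb', u₁, u₂, heq, hcond⟩ := ih hy
      refine ⟨b', hb', .cons s u₁, u₂, by rw [heq]; rfl, ?_⟩
      intro v hv
      rw [show (Walk.cons s u₁).verts = a :: u₁.verts from rfl,
        List.dropLast_cons_of_ne_nil (verts_ne_nil' u₁)] at hv
      rcases List.mem_cons.mp hv with h | h
      · exact h ▸ hx
      · exact hcond v h

theorem split_last {S : Set V} : ∀ {x y : V} (w : G.Walk x y),
    (∀ v ∈ w.verts.tail, v ∉ S) ∨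
    ∃ a', a' ∈ S ∧ ∃ (p : G.Walk x a') (q : G.Walk a' y),
      w = p.append q ∧ ∀ v ∈ q.verts.tail, v ∉ S := by
  intro x y w
  induction w with
  | nil => exact Or.inl (by simp [verts])
  | @cons a m y s w ih =>
    rcases ih with h | ⟨a', ha', u₁, u₂, heq, hcond⟩
    · by_cases hm : m ∈ S
      · exact Or.inr ⟨m, hm, .cons s .nil, w, rfl, h⟩
      · refine Or.inl ?_
        intro v hv
        rw [show (Walk.cons s w).verts.tail = w.verts from rfl] at hv
        have : w.verts = m :: w.verts.tail := by
          cases w <;> rfl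
        rw [this] at hv
        rcases List.mem_cons.mp hv with h' | h'
        · exact h' ▸ hm
        · exact h v h'
    · exact Or.inr ⟨a', ha', .cons s u₁, u₂, by rw [heq]; rfl, hcond⟩

theorem mem_dropLast_tail {α : Type*} {l : List α} {v : α} (h : v ∈ l.tail.dropLast) :
    v ∈ l.dropLast := by
  cases l with
  | nil => simp at h
  | cons x t =>
    cases t with
    | nil => simp at h
    | cons y u =>
      simp only [List.tail_cons] at h
      rw [List.dropLast_cons_of_ne_nil (by simp : (y :: u) ≠ [])]
      exact List.mem_cons_of_mem _ h

theorem mem_tail_of_mem_interm {a b : V} {w : G.Walk a b} {v : V} (h : v ∈ w.interm) :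
    v ∈ w.verts.tail :=
  List.dropLast_subset _ h

end MixedGraph.Walk

/-- An m-connecting walk between `A` and `B` contains an m-connecting subpath between
`A` and `B` all of whose intermediate vertices avoid `A ∪ B`. -/
theorem stmt_14 {V : Type*} (G : MixedGraph V) (A B C : Set V)
    (hAB : Disjoint A B) (hAC : Disjoint A C) (hBC : Disjoint B C)
    {a b : V} (ha : a ∈ A) (hb : b ∈ B) (w : G.Walk a b)
    (hw : w.IsMConnecting C) :
    ∃ a' ∈ A, ∃ b' ∈ B, ∃ (w₁ : G.Walk a a') (w' : G.Walk a' b') (w₂ : G.Walk b' b),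
      w = w₁.append (w'.append w₂) ∧ (∀ v ∈ w'.interm, v ∉ A ∪ B) ∧
      w'.IsMConnecting C := by
  classical
  obtain ⟨b', hb', p, q, heq, hB⟩ := MixedGraph.Walk.split_first (S := B) w hb
  have hp : p.IsMConnecting C ∧ q.IsMConnecting C := by
    rw [heq] at hw; exact MixedGraph.Walk.mconn_append' p q hw
  rcases MixedGraph.Walk.split_last (S := A) p with h | ⟨a', ha', u₁, u₂, heq2, hA⟩
  · refine ⟨a, ha, b', hb', .nil, p, q, heq, ?_, hp.1⟩
    intro v hv
    have hvA : v ∉ A := h v (MixedGraph.Walk.mem_tail_of_mem_interm hv)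
    have hvB : v ∉ B := hB v (MixedGraph.Walk.mem_dropLast_tail hv)
    simp [hvA, hvB]
  · refine ⟨a', ha', b', hb', u₁, u₂, q, ?_, ?_, ?_⟩
    · rw [heq, heq2, MixedGraph.Walk.append_assoc']
    · intro v hv
      have hvA : v ∉ A := hA v (MixedGraph.Walk.mem_tail_of_mem_interm hv)
      have hvB : v ∉ B := by
        apply hB
        have h1 : v ∈ u₂.verts.dropLast := MixedGraph.Walk.mem_dropLast_tail hv
        rw [heq2, MixedGraph.Walk.verts_append',
          List.dropLast_append_of_ne_nil (MixedGraph.Walk.verts_ne_nil' u₂)]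
        exact List.mem_append_right _ h1
      simp [hvA, hvB]
    · have h2 := hp.1
      rw [heq2] at h2
      exact (MixedGraph.Walk.mconn_append' u₁ u₂ h2).2
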